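/- Let M be a topological space, Φ a continuous semi-process on M, W ⊂ M × ℝ an open set, x₀ a uniformly Lyapunov stable equilibrium of Φ, and U ⊂ M an open set with x₀ ∈ U and closure(U) × ℝ ⊂ W. Let V ∋ x₀ be an open set witnessing uniform stability for U (i.e., Φ_{t₀,t}(z) ∈ U for all z ∈ V, t₀ ≥ 0, t ≥ 0). If for some x ∈ M with (x,0) ∈ W and some τ ≥ 0 one has Φ_{0,τ}(x) ∈ V and the half-trajectory of x stays in W up to time τ, then σ(x) = ∞, i.e., the half-trajectory of x never leaves W. Consequently, the set of points x with (x,0) ∈ W whose half-trajectory enters V at some finite time while remaining in W is an open subset of {x : (x,0) ∈ W} on which σ ≡ ∞. -/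
import Mathlib


open scoped ENNReal

/-- The egress time of `x` (with initial time `0`) from `W ⊆ M × ℝ` for the
semi-process `Φ` (written `Φ x t₀ t` for `Φ_{t₀,t}(x)`):
`σ(x) = sup {τ ≥ 0 : (Φ_{0,t}(x), t) ∈ W for all t ∈ [0, τ)}`, valued in `ℝ≥0∞`.
For `(x, 0) ∈ ∂W` this supremum equals `0`. -/
noncomputable def spEgressTime {M : Type*}
    (Φ : M → ℝ → ℝ → M) (W : Set (M × ℝ)) (x : M) : ℝ≥0∞ :=
  sSup {τ : ℝ≥0∞ | ∀ t : ℝ, 0 ≤ t → ENNReal.ofReal t < τ → (Φ x 0 t, t) ∈ W}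

/-- Egress points of `W ⊆ M × ℝ` for the semi-process `Φ`: boundary points
`(x₁, t₁)` such that either `t₁ > 0` and `(x₁, t₁) = (Φ_{0,σ(x)}(x), σ(x))` for some
`(x, 0) ∈ W`, or `t₁ = 0` and the forward trajectory of `x₁` leaves `W ∪ ∂W`
immediately. -/
def spEgress {M : Type*} [TopologicalSpace M]
    (Φ : M → ℝ → ℝ → M) (W : Set (M × ℝ)) : Set (M × ℝ) :=
  {p ∈ frontier W |
    (0 < p.2 ∧ ∃ x : M, (x, (0 : ℝ)) ∈ W ∧ spEgressTime Φ W x ≠ ⊤ ∧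
      p.2 = (spEgressTime Φ W x).toReal ∧ p.1 = Φ x 0 (spEgressTime Φ W x).toReal) ∨
    (p.2 = 0 ∧ ∃ ε > (0 : ℝ), ∀ t ∈ Set.Ioo (0 : ℝ) ε, (Φ p.1 0 t, t) ∉ W ∪ frontier W)}

/-- Strict egress points of `W ⊆ M × ℝ` for the semi-process `Φ`: egress points
whose continued trajectory stays outside `W ∪ ∂W` for a positive time interval
(by the semigroup property, `(Φ_{0,σ(x)+t}(x), σ(x)+t) = (Φ_{t₁,t}(x₁), t₁ + t)`). -/
def spStrictEgress {M : Type*} [TopologicalSpace M]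
    (Φ : M → ℝ → ℝ → M) (W : Set (M × ℝ)) : Set (M × ℝ) :=
  {p ∈ spEgress Φ W |
    ∃ ε > (0 : ℝ), ∀ t ∈ Set.Ioo (0 : ℝ) ε, (Φ p.1 p.2 t, p.2 + t) ∉ W ∪ frontier W}

/-- The section `S_τ = {(x, t) ∈ S : t = τ}` of a subset of the extended phase space. -/
def timeSection {M : Type*} (S : Set (M × ℝ)) (τ : ℝ) : Set (M × ℝ) :=
  {p ∈ S | p.2 = τ}

/-- If the half-trajectory of `x` stays in `W` up to a time `τ` at which it enters
the stability neighborhood `V` of the uniformly stable equilibrium `x₀` (where `V`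
witnesses uniform stability for an open `U ∋ x₀` with `closure U × ℝ ⊆ W`), then
the half-trajectory never leaves `W`, i.e. `σ(x) = ∞`. Consequently, the set of
initial points in `W` whose half-trajectory enters `V` at some finite time while
remaining in `W` is open in `{x : (x,0) ∈ W}` and `σ ≡ ∞` on it. -/
theorem egressTime_eq_top_of_enters_stability_nbhd
    {M : Type*} [TopologicalSpace M] (Φ : M → ℝ → ℝ → M)
    (hΦcont : ContinuousOn (fun q : M × ℝ × ℝ => Φ q.1 q.2.1 q.2.2) {q | 0 ≤ q.2.2})
    (hΦ0 : ∀ x t₀, Φ x t₀ 0 = x)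
    (hΦadd : ∀ (x : M) (t₀ t s : ℝ), 0 ≤ t → 0 ≤ s →
      Φ x t₀ (t + s) = Φ (Φ x t₀ t) (t₀ + t) s)
    (W : Set (M × ℝ)) (hWopen : IsOpen W)
    (x₀ : M)
    (hequil : ∀ t₀ ≥ (0 : ℝ), ∀ t ≥ (0 : ℝ), Φ x₀ t₀ t = x₀)
    (hstab : ∀ U' : Set M, IsOpen U' → x₀ ∈ U' → ∃ V' : Set M, IsOpen V' ∧ x₀ ∈ V' ∧
      ∀ x ∈ V', ∀ t₀ ≥ (0 : ℝ), ∀ t ≥ (0 : ℝ), Φ x t₀ t ∈ U')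
    (U : Set M) (hUopen : IsOpen U) (hx₀U : x₀ ∈ U)
    (hUW : (closure U) ×ˢ (Set.univ : Set ℝ) ⊆ W)
    (V : Set M) (hVopen : IsOpen V) (hx₀V : x₀ ∈ V)
    (hV : ∀ z ∈ V, ∀ t₀ ≥ (0 : ℝ), ∀ t ≥ (0 : ℝ), Φ z t₀ t ∈ U) :
    (∀ x : M, (x, (0 : ℝ)) ∈ W → ∀ τ ≥ (0 : ℝ), Φ x 0 τ ∈ V →
      (∀ t : ℝ, 0 ≤ t → t < τ → (Φ x 0 t, t) ∈ W) → spEgressTime Φ W x = ⊤) ∧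
    (∀ x : M,
      ((x, (0 : ℝ)) ∈ W ∧ ∃ τ ≥ (0 : ℝ), Φ x 0 τ ∈ V ∧
        ∀ t : ℝ, 0 ≤ t → t < τ → (Φ x 0 t, t) ∈ W) →
      spEgressTime Φ W x = ⊤ ∧
      ∃ O : Set M, IsOpen O ∧ x ∈ O ∧
        ∀ y ∈ O, (y, (0 : ℝ)) ∈ W →
          ((y, (0 : ℝ)) ∈ W ∧ ∃ τ ≥ (0 : ℝ), Φ y 0 τ ∈ V ∧
            ∀ t : ℝ, 0 ≤ t → t < τ → (Φ y 0 t, t) ∈ W)) := by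
  have hVU : V ⊆ U := fun z hz => by
    have h := hV z hz 0 le_rfl 0 le_rfl
    rwa [hΦ0] at h
  have key : ∀ x : M, (x, (0 : ℝ)) ∈ W → ∀ τ ≥ (0 : ℝ), Φ x 0 τ ∈ V →
      (∀ t : ℝ, 0 ≤ t → t < τ → (Φ x 0 t, t) ∈ W) → spEgressTime Φ W x = ⊤ := by
    intro x hxW τ hτ hτV htraj
    have hall : ∀ t : ℝ, 0 ≤ t → (Φ x 0 t, t) ∈ W := by
      intro t ht
      rcases lt_or_ge t τ with h | h
      · exact htraj t ht h
      · have hU' : Φ x 0 t ∈ U := by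
          have h2 := hV (Φ x 0 τ) hτV (0 + τ) (by linarith) (t - τ) (by linarith)
          have h3 := hΦadd x 0 τ (t - τ) hτ (by linarith)
          have h4 : τ + (t - τ) = t := by ring
          rw [h4] at h3
          rw [h3]
          exact h2
        exact hUW ⟨subset_closure hU', trivial⟩
    refine eq_top_iff.2 (le_sSup ?_)
    intro t ht _
    exact hall t ht
  refine ⟨key, ?_⟩
  rintro x ⟨hxW, τ, hτ, hτV, htraj⟩
  refine ⟨key x hxW τ hτ hτV htraj, ?_⟩
  set g : M × ℝ → M := fun p => Φ p.1 0 (max p.2 0) with hgdef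
  have hg : Continuous g := by
    have h1 : Continuous (fun p : M × ℝ => (p.1, ((0 : ℝ), max p.2 0))) := by
      fun_prop
    exact hΦcont.comp_continuous h1 (fun p => show (0:ℝ) ≤ max p.2 0 from le_max_right _ _)
  have hZ : IsOpen {p : M × ℝ | (g p, p.2) ∈ W} :=
    hWopen.preimage (hg.prodMk continuous_snd)
  have hsub : ({x} : Set M) ×ˢ Set.Icc (0 : ℝ) τ ⊆ {p : M × ℝ | (g p, p.2) ∈ W} := by
    rintro ⟨y, t⟩ ⟨hy, ht0, htτ⟩
    simp only [Set.mem_singleton_iff] at hy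
    have hmax : max t 0 = t := max_eq_left ht0
    show (Φ y 0 (max t 0), t) ∈ W
    rw [hmax, hy]
    rcases lt_or_eq_of_le htτ with h | h
    · exact htraj t ht0 h
    · have ht' : t = τ := h
      have hU' : Φ x 0 t ∈ U := ht' ▸ hVU hτV
      exact hUW ⟨subset_closure hU', trivial⟩
  obtain ⟨u, v, hu, hv, hxu, hIv, huv⟩ :=
    generalized_tube_lemma isCompact_singleton isCompact_Icc hZ hsub
  refine ⟨u ∩ (fun y => g (y, τ)) ⁻¹' V,
    hu.inter (hVopen.preimage (hg.comp (continuous_id.prodMk continuous_const))),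
    ⟨hxu rfl, ?_⟩, ?_⟩
  · show Φ x 0 (max τ 0) ∈ V
    rwa [max_eq_left hτ]
  · rintro y ⟨hyu, hyV⟩ hyW
    refine ⟨hyW, τ, hτ, ?_, ?_⟩
    · have : Φ y 0 (max τ 0) ∈ V := hyV
      rwa [max_eq_left hτ] at this
    · intro t ht htτ
      have hmem : ((y, t) : M × ℝ) ∈ u ×ˢ v := ⟨hyu, hIv ⟨ht, le_of_lt htτ⟩⟩
      have := huv hmem
      simpa only [Set.mem_setOf_eq, hgdef, max_eq_left ht] using this
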